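/- For all α, β ∈ ℂ, the unnormalized entangled coherent state ψ = coh α ⊠ coh 0 + coh 0 ⊠ coh β satisfies Ω₁ ψ = ψ and Ω₂ ψ = ψ, i.e. the target entangled coherent state passes the first two measurement settings of the verification protocol with probability 1. -/

import Mathlib

open scoped ComplexConjugate ENNReal

/-- The components of the coherent state `|α⟩`: `exp(−|α|²/2)·αⁿ/√(n!)`. -/
noncomputable def cohFun (α : ℂ) : ℕ → ℂ := fun n =>
  (Real.exp (-‖α‖ ^ 2 / 2) / Real.sqrt (Nat.factorial n) : ℝ) * α ^ n

lemma cohFun_memℓp (α : ℂ) : Memℓp (cohFun α) 2 := by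
  apply memℓp_gen
  have h : Summable (fun n : ℕ =>
      Real.exp (-‖α‖ ^ 2 / 2) ^ 2 * ((‖α‖ ^ 2) ^ n / (Nat.factorial n))) :=
    (Real.summable_pow_div_factorial (‖α‖ ^ 2)).mul_left _
  refine h.congr fun n => ?_
  have h2 : ((2 : ℝ≥0∞).toReal) = (2 : ℝ) := by norm_num
  rw [h2, Real.rpow_two]
  have hn : ‖cohFun α n‖ = Real.exp (-‖α‖ ^ 2 / 2) / Real.sqrt (Nat.factorial n) * ‖α‖ ^ n := by
    simp only [cohFun, norm_mul, norm_pow, Complex.norm_real, Real.norm_eq_abs]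
    rw [abs_of_pos (by positivity)]
  rw [hn, mul_pow, div_pow, Real.sq_sqrt (by positivity), pow_right_comm]
  ring

/-- The coherent state `|α⟩` as an element of `ℓ²(ℕ, ℂ)`. -/
noncomputable def coh (α : ℂ) : lp (fun _ : ℕ => ℂ) 2 := ⟨cohFun α, cohFun_memℓp α⟩

/-- The product state `ψ ⊠ χ` in the two-mode space `ℓ²(ℕ×ℕ, ℂ)`,
with components `(ψ ⊠ χ)(n, m) = ψ n · χ m`. -/
noncomputable def tmul (ψ χ : lp (fun _ : ℕ => ℂ) 2) : lp (fun _ : ℕ × ℕ => ℂ) 2 :=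
  ⟨fun q => ψ q.1 * χ q.2, by
    apply memℓp_gen
    have hψ := (lp.memℓp ψ).summable (p := 2) (by norm_num)
    have hχ := (lp.memℓp χ).summable (p := 2) (by norm_num)
    refine (hψ.mul_of_nonneg hχ (fun n => Real.rpow_nonneg (norm_nonneg _) _)
      (fun n => Real.rpow_nonneg (norm_nonneg _) _)).congr fun q => ?_
    rw [norm_mul, Real.mul_rpow (norm_nonneg _) (norm_nonneg _)]⟩

lemma cohFun_zero_apply (k : ℕ) : cohFun 0 k = if k = 0 then 1 else 0 := by
  cases k with
  | zero => simp [cohFun]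
  | succ n => simp [cohFun]

lemma conj_mul_self_eq (γ : ℂ) (k : ℕ) :
    conj (cohFun γ k) * cohFun γ k
      = ((Real.exp (-‖γ‖ ^ 2) * ((‖γ‖ ^ 2) ^ k / (Nat.factorial k)) : ℝ) : ℂ) := by
  have h : conj (cohFun γ k) * cohFun γ k = (Complex.normSq (cohFun γ k) : ℂ) := by
    rw [mul_comm, Complex.mul_conj]
  rw [h, Complex.normSq_eq_norm_sq]
  congr 1
  have hn : ‖cohFun γ k‖ = Real.exp (-‖γ‖ ^ 2 / 2) / Real.sqrt (Nat.factorial k) * ‖γ‖ ^ k := by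
    simp only [cohFun, norm_mul, norm_pow, Complex.norm_real, Real.norm_eq_abs]
    rw [abs_of_pos (by positivity)]
  rw [hn, mul_pow, div_pow, Real.sq_sqrt (by positivity), pow_right_comm, sq, ← Real.exp_add]
  have h2 : -‖γ‖ ^ 2 / 2 + -‖γ‖ ^ 2 / 2 = -‖γ‖ ^ 2 := by ring
  rw [h2]; ring

lemma summable_normSq (γ : ℂ) :
    Summable (fun k : ℕ => Real.exp (-‖γ‖ ^ 2) * ((‖γ‖ ^ 2) ^ k / (Nat.factorial k))) :=
  (Real.summable_pow_div_factorial (‖γ‖ ^ 2)).mul_left _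

lemma summable_conj_mul_self (γ : ℂ) :
    Summable (fun k : ℕ => conj (cohFun γ k) * cohFun γ k) := by
  have := (summable_normSq γ).map (Complex.ofRealCLM) Complex.ofRealCLM.continuous
  refine this.congr fun k => ?_
  rw [conj_mul_self_eq]; rfl

lemma cohFun_norm_one (γ : ℂ) :
    ∑' k : ℕ, conj (cohFun γ k) * cohFun γ k = 1 := by
  have h1 : ∑' k : ℕ, conj (cohFun γ k) * cohFun γ k
      = ((∑' k : ℕ, Real.exp (-‖γ‖ ^ 2) * ((‖γ‖ ^ 2) ^ k / (Nat.factorial k)) : ℝ) : ℂ) := by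
    rw [Complex.ofReal_tsum]
    exact tsum_congr fun k => conj_mul_self_eq γ k
  rw [h1, tsum_mul_left]
  have h2 : ∑' k : ℕ, (‖γ‖ ^ 2) ^ k / (Nat.factorial k : ℝ) = Real.exp (‖γ‖ ^ 2) := by
    rw [Real.exp_eq_exp_ℝ, NormedSpace.exp_eq_tsum_div]
  rw [h2, ← Real.exp_add]
  norm_num

lemma sum_helper (γ A B : ℂ) :
    ∑' k : ℕ, conj (cohFun γ k) * (A * cohFun 0 k + B * cohFun γ k)
      = A * conj (cohFun γ 0) + B := by
  have hs1 : Summable (fun k : ℕ => A * (conj (cohFun γ k) * cohFun 0 k)) := by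
    apply summable_of_ne_finset_zero (s := {0})
    intro k hk
    simp only [Finset.mem_singleton] at hk
    simp [cohFun_zero_apply, hk]
  have hs2 : Summable (fun k : ℕ => B * (conj (cohFun γ k) * cohFun γ k)) :=
    (summable_conj_mul_self γ).mul_left B
  calc ∑' k : ℕ, conj (cohFun γ k) * (A * cohFun 0 k + B * cohFun γ k)
      = ∑' k : ℕ, (A * (conj (cohFun γ k) * cohFun 0 k)
          + B * (conj (cohFun γ k) * cohFun γ k)) := tsum_congr fun k => by ring
    _ = (∑' k : ℕ, A * (conj (cohFun γ k) * cohFun 0 k))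
          + ∑' k : ℕ, B * (conj (cohFun γ k) * cohFun γ k) := Summable.tsum_add hs1 hs2
    _ = A * (∑' k : ℕ, conj (cohFun γ k) * cohFun 0 k)
          + B * (∑' k : ℕ, conj (cohFun γ k) * cohFun γ k) := by rw [tsum_mul_left, tsum_mul_left]
    _ = A * conj (cohFun γ 0) + B := by
        rw [cohFun_norm_one, mul_one]
        congr 1
        rw [tsum_eq_single 0 (fun k hk => by simp [cohFun_zero_apply, hk])]
        simp [cohFun_zero_apply]

lemma sum_helper' (γ A B : ℂ) :
    ∑' k : ℕ, conj (cohFun γ k) * (cohFun γ k * A + cohFun 0 k * B)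
      = A + conj (cohFun γ 0) * B := by
  calc ∑' k : ℕ, conj (cohFun γ k) * (cohFun γ k * A + cohFun 0 k * B)
      = ∑' k : ℕ, conj (cohFun γ k) * (B * cohFun 0 k + A * cohFun γ k) :=
        tsum_congr fun k => by ring
    _ = B * conj (cohFun γ 0) + A := sum_helper γ B A
    _ = A + conj (cohFun γ 0) * B := by ring

/-- the target entangled coherent state passes the first two measurement
settings `Ω₁` (projection onto states with no photons in at least one mode) and
`Ω₂ = I ⊗ P_β + P_α ⊗ I − P_α ⊗ P_β` with probability 1. -/
theorem ecs_fixed_by_omega12 (α β : ℂ)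
    (Ω₁ Ω₂ : lp (fun _ : ℕ × ℕ => ℂ) 2 →L[ℂ] lp (fun _ : ℕ × ℕ => ℂ) 2)
    (hΩ₁ : ∀ (φ : lp (fun _ : ℕ × ℕ => ℂ) 2) (n m : ℕ),
      (Ω₁ φ) (n, m) = if n = 0 ∨ m = 0 then φ (n, m) else 0)
    (hΩ₂ : ∀ (φ : lp (fun _ : ℕ × ℕ => ℂ) 2) (n m : ℕ),
      (Ω₂ φ) (n, m)
        = coh β m * (∑' k : ℕ, conj (coh β k) * φ (n, k))
        + coh α n * (∑' k : ℕ, conj (coh α k) * φ (k, m))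
        - coh α n * coh β m * (∑' k : ℕ, ∑' l : ℕ, conj (coh α k) * conj (coh β l) * φ (k, l))) :
    Ω₁ (tmul (coh α) (coh 0) + tmul (coh 0) (coh β))
      = tmul (coh α) (coh 0) + tmul (coh 0) (coh β) ∧
    Ω₂ (tmul (coh α) (coh 0) + tmul (coh 0) (coh β))
      = tmul (coh α) (coh 0) + tmul (coh 0) (coh β) := by
  set ψ := tmul (coh α) (coh 0) + tmul (coh 0) (coh β) with hψdef
  have hψ : ∀ n m : ℕ, ψ (n, m) = cohFun α n * cohFun 0 m + cohFun 0 n * cohFun β m := by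
    intro n m
    rw [hψdef, lp.coeFn_add]
    rfl
  constructor
  · refine lp.ext (funext fun q => ?_)
    obtain ⟨n, m⟩ := q
    rw [hΩ₁]
    split_ifs with h
    · rfl
    · push_neg at h
      rw [hψ, cohFun_zero_apply, cohFun_zero_apply, if_neg h.1, if_neg h.2]
      ring
  · refine lp.ext (funext fun q => ?_)
    obtain ⟨n, m⟩ := q
    have h1 : ∑' k : ℕ, conj ((coh β : ∀ _ : ℕ, ℂ) k) * ψ (n, k)
        = cohFun α n * conj (cohFun β 0) + cohFun 0 n := by
      calc ∑' k : ℕ, conj ((coh β : ∀ _ : ℕ, ℂ) k) * ψ (n, k)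
          = ∑' k : ℕ, conj (cohFun β k)
              * (cohFun α n * cohFun 0 k + cohFun 0 n * cohFun β k) :=
            tsum_congr fun k => by rw [hψ]; rfl
        _ = _ := sum_helper β _ _
    have h2 : ∑' k : ℕ, conj ((coh α : ∀ _ : ℕ, ℂ) k) * ψ (k, m)
        = cohFun 0 m + conj (cohFun α 0) * cohFun β m := by
      calc ∑' k : ℕ, conj ((coh α : ∀ _ : ℕ, ℂ) k) * ψ (k, m)
          = ∑' k : ℕ, conj (cohFun α k)
              * (cohFun α k * cohFun 0 m + cohFun 0 k * cohFun β m) :=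
            tsum_congr fun k => by rw [hψ]; rfl
        _ = _ := sum_helper' α _ _
    have h3 : ∑' k : ℕ, ∑' l : ℕ,
          conj ((coh α : ∀ _ : ℕ, ℂ) k) * conj ((coh β : ∀ _ : ℕ, ℂ) l) * ψ (k, l)
        = conj (cohFun β 0) + conj (cohFun α 0) := by
      have hinner : ∀ k : ℕ, ∑' l : ℕ,
            conj ((coh α : ∀ _ : ℕ, ℂ) k) * conj ((coh β : ∀ _ : ℕ, ℂ) l) * ψ (k, l)
          = conj (cohFun α k) * (cohFun α k * conj (cohFun β 0) + cohFun 0 k) := by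
        intro k
        calc ∑' l : ℕ, conj ((coh α : ∀ _ : ℕ, ℂ) k) * conj ((coh β : ∀ _ : ℕ, ℂ) l) * ψ (k, l)
            = ∑' l : ℕ, conj (cohFun α k) * (conj (cohFun β l)
                * (cohFun α k * cohFun 0 l + cohFun 0 k * cohFun β l)) :=
              tsum_congr fun l => by
                rw [hψ]
                simp only [show ((coh α : ∀ _ : ℕ, ℂ) k) = cohFun α k from rfl,
                  show ((coh β : ∀ _ : ℕ, ℂ) l) = cohFun β l from rfl]
                ring
          _ = conj (cohFun α k) * ∑' l : ℕ, conj (cohFun β l)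
                * (cohFun α k * cohFun 0 l + cohFun 0 k * cohFun β l) := tsum_mul_left
          _ = _ := by rw [sum_helper β (cohFun α k) (cohFun 0 k)]
      calc ∑' k : ℕ, ∑' l : ℕ,
            conj ((coh α : ∀ _ : ℕ, ℂ) k) * conj ((coh β : ∀ _ : ℕ, ℂ) l) * ψ (k, l)
          = ∑' k : ℕ, conj (cohFun α k)
              * (cohFun α k * conj (cohFun β 0) + cohFun 0 k * 1) :=
            tsum_congr fun k => by rw [hinner k]; ring
        _ = conj (cohFun β 0) + conj (cohFun α 0) * 1 := sum_helper' α _ _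
        _ = _ := by ring
    rw [hΩ₂ ψ n m, h1, h2, h3, hψ n m]
    show cohFun β m * _ + cohFun α n * _ - cohFun α n * cohFun β m * _ = _
    ring
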